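/- Let P = m_1⋯m_d, let a_d = ∑_{w∈T(m,k)} des(w), and for each integer n ≥ 1 let a'(n) denote the total number of descents over all (m_1,…,m_d,n)-tensor words over [k]. Then the following identity of formal power series in ℚ[[x]] holds: (∑_{n≥1} a'(n)·x^n)·(1 − k^P·x)^2 = a_d·x + (1/2)·(k−1)·k^{2P−1}·P·x^2. -/

import Mathlib

open Finset


/-- The number of descents of an `m`-tensor word `w` over `[k]`. -/
def tensorDes {k d : ℕ} {m : Fin d → ℕ} (w : (∀ ℓ, Fin (m ℓ)) → Fin k) : ℕ :=
  (Finset.univ.filter fun p : (∀ ℓ, Fin (m ℓ)) × (∀ ℓ, Fin (m ℓ)) =>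
      w p.2 < w p.1 ∧
        ∃ ℓ, ((p.2 ℓ : ℕ) = (p.1 ℓ : ℕ) + 1 ∧ ∀ r, r ≠ ℓ → p.2 r = p.1 r)).card

/-- The number of descents of an `(m₁,…,m_d,n)`-tensor word `v` over `[k]`, where the
index set is represented as `([m₁]×⋯×[m_d]) × [n]`; descents are taken in all `d + 1`
directions. -/
def extTensorDes {k d n : ℕ} {m : Fin d → ℕ}
    (v : ((∀ ℓ, Fin (m ℓ)) × Fin n) → Fin k) : ℕ :=
  (Finset.univ.filter fun p :
      ((∀ ℓ, Fin (m ℓ)) × Fin n) × ((∀ ℓ, Fin (m ℓ)) × Fin n) =>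
      v p.2 < v p.1 ∧
        ((p.2.2 = p.1.2 ∧
            ∃ ℓ, ((p.2.1 ℓ : ℕ) = (p.1.1 ℓ : ℕ) + 1 ∧ ∀ r, r ≠ ℓ → p.2.1 r = p.1.1 r)) ∨
          (p.2.1 = p.1.1 ∧ (p.2.2 : ℕ) = (p.1.2 : ℕ) + 1))).card

private def dlt (k : ℕ) : ℕ := (Finset.univ.filter fun p : Fin k × Fin k => p.2 < p.1).card

private lemma dlt_mul_two (k : ℕ) : dlt k * 2 = k * (k - 1) := by
  have h : dlt k = ∑ a : Fin k, (a : ℕ) := by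
    rw [dlt, ← Finset.univ_product_univ, Finset.card_filter, Finset.sum_product]
    refine Finset.sum_congr rfl fun a _ => ?_
    rw [← Finset.card_filter]
    have h2 : (Finset.univ.filter fun b : Fin k => b < a) = Finset.Iio a := by
      ext b; simp
    rw [h2, Fin.card_Iio]
  rw [h, Fin.sum_univ_eq_sum_range (fun i => i), Finset.sum_range_id_mul_two]

private def pairEquiv {I : Type*} [DecidableEq I] (k : ℕ) (i j : I) (hij : i ≠ j) :
    (∀ _x : {x : I // x = i ∨ x = j}, Fin k) ≃ Fin k × Fin k where
  toFun f := (f ⟨i, Or.inl rfl⟩, f ⟨j, Or.inr rfl⟩)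
  invFun p x := if (x : I) = i then p.1 else p.2
  left_inv f := by
    funext x
    rcases x with ⟨x, hx | hx⟩ <;> subst hx
    · simp
    · simp [Ne.symm hij]
  right_inv p := by
    simp [Ne.symm hij]

private lemma card_lt_pair {I : Type*} [Fintype I] [DecidableEq I] (k : ℕ) {i j : I}
    (hij : i ≠ j) :
    (Finset.univ.filter fun v : I → Fin k => v j < v i).card
      = dlt k * k ^ (Fintype.card I - 2) := by
  classical
  rw [← Fintype.card_subtype]
  have e4 : {v : I → Fin k // v j < v i}
      ≃ {p : Fin k × Fin k // p.2 < p.1} × ({x : I // ¬ (x = i ∨ x = j)} → Fin k) :=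
    (((Equiv.piEquivPiSubtypeProd (fun x => x = i ∨ x = j) (fun _ => Fin k)).trans
      (Equiv.prodCongr (pairEquiv k i j hij) (Equiv.refl _))).subtypeEquiv
        (p := fun v => v j < v i)
        (q := fun y => y.1.2 < y.1.1) (fun v => Iff.rfl)).trans
      (Equiv.prodSubtypeFstEquivSubtypeProd (p := fun a : Fin k × Fin k => a.2 < a.1))
  rw [Fintype.card_congr e4, Fintype.card_prod, Fintype.card_fun, Fintype.card_fin]
  congr 2
  · rw [Fintype.card_subtype]; rfl
  · rw [Fintype.card_subtype_compl]
    congr 1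
    rw [Fintype.card_subtype]
    have h5 : (Finset.univ.filter fun x : I => x = i ∨ x = j) = {i, j} := by
      ext x; simp
    rw [h5, Finset.card_insert_of_notMem (by simp [hij]), Finset.card_singleton]

private lemma sum_des {I : Type*} [Fintype I] [DecidableEq I] (k : ℕ)
    (E : I × I → Prop) [DecidablePred E] (hE : ∀ p : I × I, E p → p.1 ≠ p.2) :
    ∑ v : I → Fin k, (Finset.univ.filter fun p : I × I => v p.2 < v p.1 ∧ E p).card
      = (Finset.univ.filter E).card * (dlt k * k ^ (Fintype.card I - 2)) := by
  classical
  simp_rw [Finset.card_filter]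
  rw [Finset.sum_comm]
  have key : ∀ p : I × I,
      (∑ v : I → Fin k, if v p.2 < v p.1 ∧ E p then 1 else 0)
        = if E p then dlt k * k ^ (Fintype.card I - 2) else 0 := by
    intro p
    by_cases hp : E p
    · simp only [hp, and_true, if_true]
      rw [← Finset.card_filter]
      exact card_lt_pair k (hE p hp)
    · simp [hp]
  simp_rw [key]
  rw [← Finset.sum_filter, ← Finset.sum_filter]
  simp [mul_comm]

-- diagonal count
private lemma card_diag (B : Type*) [Fintype B] [DecidableEq B] :
    (Finset.univ.filter fun q : B × B => q.2 = q.1).card = Fintype.card B := by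
  rw [← Finset.univ_product_univ, Finset.card_filter, Finset.sum_product]
  simp

-- successor count on Fin n
private lemma card_succ_pairs (n : ℕ) :
    (Finset.univ.filter fun q : Fin n × Fin n => (q.2 : ℕ) = (q.1 : ℕ) + 1).card = n - 1 := by
  rw [← Finset.univ_product_univ, Finset.card_filter, Finset.sum_product]
  have key : ∀ t1 : Fin n, (∑ t2 : Fin n, if (t2 : ℕ) = (t1 : ℕ) + 1 then 1 else 0)
      = if (t1 : ℕ) + 1 < n then 1 else 0 := by
    intro t1
    by_cases h : (t1 : ℕ) + 1 < n
    · rw [if_pos h]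
      have : ∀ t2 : Fin n, ((t2 : ℕ) = (t1 : ℕ) + 1) ↔ t2 = ⟨(t1 : ℕ) + 1, h⟩ := by
        intro t2; rw [Fin.ext_iff]
      simp_rw [this]
      simp
    · rw [if_neg h]
      refine Finset.sum_eq_zero fun t2 _ => ?_
      rw [if_neg]
      have := t2.isLt
      omega
  simp_rw [key]
  rw [Fin.sum_univ_eq_sum_range (fun i => if i + 1 < n then 1 else 0), ← Finset.card_filter]
  have h2 : (Finset.range n).filter (fun i => i + 1 < n) = Finset.range (n - 1) := by
    ext i; simp only [Finset.mem_filter, Finset.mem_range]; omega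
  rw [h2, Finset.card_range]

private def edgeCard {d : ℕ} (m : Fin d → ℕ) : ℕ :=
  (Finset.univ.filter fun p : (∀ ℓ, Fin (m ℓ)) × (∀ ℓ, Fin (m ℓ)) =>
      ∃ ℓ, ((p.2 ℓ : ℕ) = (p.1 ℓ : ℕ) + 1 ∧ ∀ r, r ≠ ℓ → p.2 r = p.1 r)).card

private lemma card_ext_edges {d : ℕ} (m : Fin d → ℕ) (n : ℕ) :
    (Finset.univ.filter fun p :
        ((∀ ℓ, Fin (m ℓ)) × Fin n) × ((∀ ℓ, Fin (m ℓ)) × Fin n) =>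
        ((p.2.2 = p.1.2 ∧
            ∃ ℓ, ((p.2.1 ℓ : ℕ) = (p.1.1 ℓ : ℕ) + 1 ∧ ∀ r, r ≠ ℓ → p.2.1 r = p.1.1 r)) ∨
          (p.2.1 = p.1.1 ∧ (p.2.2 : ℕ) = (p.1.2 : ℕ) + 1))).card
      = edgeCard m * n + (∏ ℓ, m ℓ) * (n - 1) := by
  classical
  set A := ∀ ℓ, Fin (m ℓ) with hA
  rw [Finset.card_equiv (Equiv.prodProdProdComm A (Fin n) A (Fin n))
    (t := Finset.univ.filter fun q : (A × A) × (Fin n × Fin n) =>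
      (((∃ ℓ, ((q.1.2 ℓ : ℕ) = (q.1.1 ℓ : ℕ) + 1 ∧ ∀ r, r ≠ ℓ → q.1.2 r = q.1.1 r))
          ∧ q.2.2 = q.2.1) ∨
        (q.1.2 = q.1.1 ∧ (q.2.2 : ℕ) = (q.2.1 : ℕ) + 1)))
    (fun p => by
      simp only [Finset.mem_filter, Finset.mem_univ, true_and, Equiv.prodProdProdComm_apply]
      exact or_congr and_comm Iff.rfl)]
  rw [Finset.filter_or, Finset.card_union_of_disjoint]
  · congr 1
    · have hprod : (Finset.univ.filter fun q : (A × A) × (Fin n × Fin n) =>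
          ((∃ ℓ, ((q.1.2 ℓ : ℕ) = (q.1.1 ℓ : ℕ) + 1 ∧ ∀ r, r ≠ ℓ → q.1.2 r = q.1.1 r))
            ∧ q.2.2 = q.2.1))
        = (Finset.univ.filter fun p : A × A =>
            ∃ ℓ, ((p.2 ℓ : ℕ) = (p.1 ℓ : ℕ) + 1 ∧ ∀ r, r ≠ ℓ → p.2 r = p.1 r))
          ×ˢ (Finset.univ.filter fun t : Fin n × Fin n => t.2 = t.1) := by
        ext q
        simp only [Finset.mem_filter, Finset.mem_univ, true_and, Finset.mem_product]
      rw [hprod, Finset.card_product, card_diag, Fintype.card_fin, edgeCard]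
    · have hprod : (Finset.univ.filter fun q : (A × A) × (Fin n × Fin n) =>
          (q.1.2 = q.1.1 ∧ (q.2.2 : ℕ) = (q.2.1 : ℕ) + 1))
        = (Finset.univ.filter fun p : A × A => p.2 = p.1)
          ×ˢ (Finset.univ.filter fun t : Fin n × Fin n => (t.2 : ℕ) = (t.1 : ℕ) + 1) := by
        ext q
        simp only [Finset.mem_filter, Finset.mem_univ, true_and, Finset.mem_product]
      rw [hprod, Finset.card_product, card_diag, card_succ_pairs]
      congr 1
      simp [hA, Fintype.card_pi]
  · rw [Finset.disjoint_left]
    rintro q hq hq'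
    simp only [Finset.mem_filter, Finset.mem_univ, true_and] at hq hq'
    obtain ⟨⟨ℓ, hℓ, -⟩, -⟩ := hq
    obtain ⟨h1, -⟩ := hq'
    rw [h1] at hℓ
    omega

/-- Let `P = ∏ m ℓ`, `a_d` the total number of descents over all `m`-tensor words over
`[k]`, and `a'(n)` the total number of descents over all `(m₁,…,m_d,n)`-tensor words over
`[k]`. Then `(∑_{n ≥ 1} a'(n) xⁿ)·(1 − k^P x)² = a_d x + (1/2)(k−1)k^(2P−1) P x²`
as formal power series over `ℚ`. -/
theorem gen_fun_total_descents (k d : ℕ) (hk : 1 ≤ k) (hd : 1 ≤ d)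
    (m : Fin d → ℕ) (hm : ∀ ℓ, 1 ≤ m ℓ) :
    (PowerSeries.mk fun n => if n = 0 then (0 : ℚ) else
        ∑ v : ((∀ ℓ, Fin (m ℓ)) × Fin n) → Fin k, (extTensorDes v : ℚ)) *
      (1 - PowerSeries.C ((k : ℚ) ^ (∏ ℓ, m ℓ)) * PowerSeries.X) ^ 2 =
      PowerSeries.C (∑ w : (∀ ℓ, Fin (m ℓ)) → Fin k, (tensorDes w : ℚ)) *
          PowerSeries.X +
        PowerSeries.C ((1 / 2) * ((k : ℚ) - 1) * (k : ℚ) ^ (2 * (∏ ℓ, m ℓ) - 1) *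
            ∏ ℓ, (m ℓ : ℚ)) *
          PowerSeries.X ^ 2 := by
  classical
  have hk0 : (k : ℚ) ≠ 0 := Nat.cast_ne_zero.mpr (by omega)
  rw [show (∏ ℓ, ((m ℓ : ℚ))) = ((∏ ℓ, m ℓ : ℕ) : ℚ) by rw [Nat.cast_prod]]
  set P : ℕ := ∏ ℓ, m ℓ with hPdef
  have hP : 1 ≤ P := Finset.one_le_prod' fun ℓ _ => hm ℓ
  set E : ℕ := edgeCard m with hEdef
  set D : ℕ := dlt k with hDdef
  -- cardinality of the index set
  have hcardA : Fintype.card (∀ ℓ, Fin (m ℓ)) = P := by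
    simp [Fintype.card_pi, hPdef]
  -- naturals closed form for a'(n)
  have hnat : ∀ n : ℕ, (∑ v : ((∀ ℓ, Fin (m ℓ)) × Fin n) → Fin k, extTensorDes v)
      = (E * n + P * (n - 1)) * (D * k ^ (P * n - 2)) := by
    intro n
    have hE' : ∀ p : ((∀ ℓ, Fin (m ℓ)) × Fin n) × ((∀ ℓ, Fin (m ℓ)) × Fin n),
        ((p.2.2 = p.1.2 ∧
            ∃ ℓ, ((p.2.1 ℓ : ℕ) = (p.1.1 ℓ : ℕ) + 1 ∧ ∀ r, r ≠ ℓ → p.2.1 r = p.1.1 r)) ∨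
          (p.2.1 = p.1.1 ∧ (p.2.2 : ℕ) = (p.1.2 : ℕ) + 1)) → p.1 ≠ p.2 := by
      rintro p (⟨h2, ℓ, hℓ, -⟩ | ⟨h1, hs⟩) hc
      · rw [hc] at hℓ; omega
      · rw [hc] at hs; omega
    have := sum_des (I := (∀ ℓ, Fin (m ℓ)) × Fin n) k
      (E := fun p => ((p.2.2 = p.1.2 ∧
            ∃ ℓ, ((p.2.1 ℓ : ℕ) = (p.1.1 ℓ : ℕ) + 1 ∧ ∀ r, r ≠ ℓ → p.2.1 r = p.1.1 r)) ∨
          (p.2.1 = p.1.1 ∧ (p.2.2 : ℕ) = (p.1.2 : ℕ) + 1))) hE'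
    rw [card_ext_edges] at this
    simp only [extTensorDes]
    have hcard : Fintype.card ((∀ ℓ, Fin (m ℓ)) × Fin n) = P * n := by
      rw [Fintype.card_prod, hcardA, Fintype.card_fin]
    rw [hcard] at this
    exact this
  -- total descents of m-tensor words
  have hAd : (∑ w : (∀ ℓ, Fin (m ℓ)) → Fin k, tensorDes w) = E * (D * k ^ (P - 2)) := by
    have hE' : ∀ p : (∀ ℓ, Fin (m ℓ)) × (∀ ℓ, Fin (m ℓ)),
        (∃ ℓ, ((p.2 ℓ : ℕ) = (p.1 ℓ : ℕ) + 1 ∧ ∀ r, r ≠ ℓ → p.2 r = p.1 r)) → p.1 ≠ p.2 := by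
      rintro p ⟨ℓ, hℓ, -⟩ hc
      rw [hc] at hℓ; omega
    have := sum_des (I := ∀ ℓ, Fin (m ℓ)) k
      (E := fun p => ∃ ℓ, ((p.2 ℓ : ℕ) = (p.1 ℓ : ℕ) + 1 ∧ ∀ r, r ≠ ℓ → p.2 r = p.1 r)) hE'
    rw [hcardA] at this
    simp only [tensorDes]
    exact this
  -- degenerate grid has no edges
  have hE0 : P = 1 → E = 0 := by
    intro h1
    have : Subsingleton (∀ ℓ, Fin (m ℓ)) :=
      Fintype.card_le_one_iff_subsingleton.mp (by rw [hcardA, h1])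
    rw [hEdef, edgeCard, Finset.card_eq_zero, Finset.filter_eq_empty_iff]
    rintro p - ⟨ℓ, hℓ, -⟩
    have : p.2 = p.1 := Subsingleton.elim _ _
    rw [this] at hℓ; omega
  -- rational closed form
  have hQ : ∀ n : ℕ, 1 ≤ n →
      (∑ v : ((∀ ℓ, Fin (m ℓ)) × Fin n) → Fin k, (extTensorDes v : ℚ))
        = (D : ℚ) / (k : ℚ) ^ 2 * (((E : ℚ) + P) * n - P) * ((k : ℚ) ^ P) ^ n := by
    intro n hn
    rw [← Nat.cast_sum, hnat n]
    by_cases h2 : 2 ≤ P * n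
    · have hpow : ((k : ℚ)) ^ (P * n - 2) = ((k : ℚ) ^ P) ^ n / (k : ℚ) ^ 2 := by
        rw [div_eq_mul_inv, ← pow_mul, ← pow_sub₀ _ hk0 h2]
      push_cast [Nat.cast_sub hn, hpow]
      ring
    · have hP1 : P = 1 := by nlinarith
      have hn1 : n = 1 := by nlinarith
      subst hn1
      rw [hE0 hP1, hP1]
      norm_num
  -- expand the square
  rw [show ∀ S : PowerSeries ℚ, S * (1 - PowerSeries.C ((k : ℚ) ^ P) * PowerSeries.X) ^ 2
      = S - PowerSeries.C (2 * (k : ℚ) ^ P) * (S * PowerSeries.X ^ 1)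
        + PowerSeries.C (((k : ℚ) ^ P) ^ 2) * (S * PowerSeries.X ^ 2) from fun S => by
    simp only [map_mul, map_pow, map_ofNat]
    ring]
  ext N
  simp only [map_add, map_sub, PowerSeries.coeff_C_mul, PowerSeries.coeff_mul_X_pow',
    PowerSeries.coeff_mk, PowerSeries.coeff_X, PowerSeries.coeff_X_pow, PowerSeries.coeff_C]
  have hD : (D : ℚ) = (k : ℚ) * ((k : ℚ) - 1) / 2 := by
    have h0 := congrArg (Nat.cast : ℕ → ℚ) (dlt_mul_two k)
    push_cast [Nat.cast_sub hk] at h0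
    rw [hDdef]
    linarith
  match N with
  | 0 => norm_num
  | 1 =>
    norm_num
    rw [← Nat.cast_sum, ← Nat.cast_sum, hnat 1, hAd]
    norm_num
  | 2 =>
    simp only [show (2:ℕ) - 1 = 1 from rfl, show (2:ℕ) - 2 = 0 from rfl,
      if_neg (show ¬(2 = 0) by omega), if_pos (show (1:ℕ) ≤ 2 by omega),
      if_neg (show ¬(1 = 0) by omega), if_pos (show (2:ℕ) ≤ 2 by omega),
      if_pos (show (0:ℕ) = 0 from rfl), if_neg (show ¬(2 = 1) by omega), if_true,
      mul_zero, mul_one, add_zero, zero_add]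
    rw [hQ 2 (by norm_num), hQ 1 (by norm_num), hD,
      show (k : ℚ) ^ (2 * P - 1) = ((k : ℚ) ^ P) ^ 2 / (k : ℚ) by
        rw [pow_sub₀ _ hk0 (by omega : 1 ≤ 2 * P), pow_one, ← pow_mul, mul_comm P 2,
          div_eq_mul_inv]]
    field_simp
    ring
  | (n+3) =>
    simp only [show n + 3 - 1 = n + 2 from rfl, show n + 3 - 2 = n + 1 from rfl,
      if_neg (show ¬(n + 3 = 0) by omega), if_pos (show (1:ℕ) ≤ n + 3 by omega),
      if_neg (show ¬(n + 2 = 0) by omega), if_pos (show (2:ℕ) ≤ n + 3 by omega),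
      if_neg (show ¬(n + 1 = 0) by omega), if_neg (show ¬(n + 3 = 1) by omega),
      mul_zero, mul_one, add_zero, zero_add]
    rw [hQ (n+3) (by omega), hQ (n+3-1) (by omega), hQ (n+3-2) (by omega)]
    push_cast [Nat.cast_sub (show 1 ≤ n + 3 by omega), Nat.cast_sub (show 2 ≤ n + 3 by omega)]
    ring
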